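/- Let P₁ = (p₁₁, p₁₂), P₂ = (p₂₁, p₂₂), P_n = (p_{n1}, p_{n2}) ∈ ℝ²_{≥0} with P₁ ≠ 0, and suppose that for all sufficiently large i ∈ ℕ the segments i·[P₁,P₂] and (i+1)·[P_n,P₁] intersect in exactly one point V_i. Then the distance from V_i to the line through the origin and P₁ is independent of i. -/

import Mathlib

open Pointwise

lemma infDist_line (P1 : EuclideanSpace ℝ (Fin 2)) (h1 : P1 ≠ 0)
    (x : EuclideanSpace ℝ (Fin 2)) :
    Metric.infDist x {y | ∃ t : ℝ, y = t • P1} =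
      |x 0 * P1 1 - x 1 * P1 0| / Real.sqrt (P1 0 ^ 2 + P1 1 ^ 2) := by
  set p0 := P1 0 with hp0
  set p1 := P1 1 with hp1
  have hA : 0 < p0 ^ 2 + p1 ^ 2 := by
    rcases lt_or_eq_of_le (by positivity : (0:ℝ) ≤ p0 ^ 2 + p1 ^ 2) with h | h
    · exact h
    · exfalso; apply h1
      have h0 : p0 = 0 ∧ p1 = 0 := by constructor <;> nlinarith
      ext i
      fin_cases i
      · exact h0.1
      · exact h0.2
  have hsA : 0 < Real.sqrt (p0 ^ 2 + p1 ^ 2) := Real.sqrt_pos.2 hA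
  set c := x 0 * p1 - x 1 * p0 with hc
  have habs : |c| / Real.sqrt (p0 ^ 2 + p1 ^ 2)
      = Real.sqrt (c ^ 2 / (p0 ^ 2 + p1 ^ 2)) := by
    rw [Real.sqrt_div (sq_nonneg c), Real.sqrt_sq_eq_abs]
  have hdist : ∀ t : ℝ, dist x (t • P1) =
      Real.sqrt ((x 0 - t * p0) ^ 2 + (x 1 - t * p1) ^ 2) := by
    intro t
    rw [EuclideanSpace.dist_eq]
    congr 1
    simp [Fin.sum_univ_two, Real.dist_eq, sq_abs]; rfl
  have hlower : ∀ t : ℝ, |c| / Real.sqrt (p0 ^ 2 + p1 ^ 2) ≤ dist x (t • P1) := by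
    intro t
    rw [hdist, habs]
    apply Real.sqrt_le_sqrt
    rw [div_le_iff₀ hA]
    simp only [hc]
    nlinarith [sq_nonneg (p0 * (x 0 - t * p0) + p1 * (x 1 - t * p1))]
  apply le_antisymm
  · set t0 : ℝ := (x 0 * p0 + x 1 * p1) / (p0 ^ 2 + p1 ^ 2) with ht0
    have hmem : t0 • P1 ∈ {y | ∃ t : ℝ, y = t • P1} := ⟨t0, rfl⟩
    calc Metric.infDist x {y | ∃ t : ℝ, y = t • P1} ≤ dist x (t0 • P1) :=
          Metric.infDist_le_dist_of_mem hmem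
      _ = |c| / Real.sqrt (p0 ^ 2 + p1 ^ 2) := by
          rw [hdist, habs]
          congr 1
          rw [ht0, hc]; field_simp; ring
  · by_contra hlt
    push_neg at hlt
    have hne : Set.Nonempty {y | ∃ t : ℝ, y = t • P1} := ⟨(0:ℝ) • P1, ⟨0, rfl⟩⟩
    rw [Metric.infDist_lt_iff hne] at hlt
    obtain ⟨y, ⟨t, rfl⟩, hy⟩ := hlt
    exact absurd hy (not_lt.2 (hlower t))

/-- If for all large `i` the segments `i·[P₁,P₂]` and `(i+1)·[Pₙ,P₁]` intersect in
exactly one point `V_i`, then the distance from `V_i` to the line `τ₁` through the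
origin and `P₁` does not depend on `i`. -/
theorem stmt14 (P1 P2 Pn : EuclideanSpace ℝ (Fin 2)) (h1 : P1 ≠ 0)
    (V : ℕ → EuclideanSpace ℝ (Fin 2)) (N : ℕ)
    (hV : ∀ i ≥ N,
      ((i : ℝ) • segment ℝ P1 P2) ∩ (((i : ℝ) + 1) • segment ℝ Pn P1) = {V i}) :
    ∀ i ≥ N, ∀ j ≥ N,
      Metric.infDist (V i) {x | ∃ t : ℝ, x = t • P1} =
      Metric.infDist (V j) {x | ∃ t : ℝ, x = t • P1} := by
  have hA : 0 < P1 0 ^ 2 + P1 1 ^ 2 := by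
    rcases lt_or_eq_of_le (by positivity : (0:ℝ) ≤ P1 0 ^ 2 + P1 1 ^ 2) with h | h
    · exact h
    · exfalso; apply h1
      have h0 : P1 0 = 0 ∧ P1 1 = 0 := by constructor <;> nlinarith
      ext k
      fin_cases k
      · exact h0.1
      · exact h0.2
  set C2 : ℝ := P2 0 * P1 1 - P2 1 * P1 0 with hC2def
  set Cn : ℝ := Pn 0 * P1 1 - Pn 1 * P1 0 with hCndef
  set A : ℝ := P1 0 ^ 2 + P1 1 ^ 2 with hAdef
  set a2 : ℝ := P2 0 * P1 0 + P2 1 * P1 1 with ha2def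
  set an : ℝ := Pn 0 * P1 0 + Pn 1 * P1 1 with handef
  have key : ∀ i ≥ N, ∃ u v : ℝ,
      (V i 0 * P1 1 - V i 1 * P1 0) = u * C2 ∧
      (V i 0 * P1 1 - V i 1 * P1 0) = v * Cn ∧
      u * (a2 - A) - v * (an - A) = A := by
    intro i hi
    have hmem : V i ∈ ((i : ℝ) • segment ℝ P1 P2) ∩
        (((i : ℝ) + 1) • segment ℝ Pn P1) := by
      rw [hV i hi]; exact rfl
    obtain ⟨hm1, hm2⟩ := hmem
    rw [Set.mem_smul_set] at hm1 hm2
    obtain ⟨y, hy, hyeq⟩ := hm1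
    obtain ⟨z, hz, hzeq⟩ := hm2
    obtain ⟨a, b, ha, hb, hab, hy'⟩ := hy
    obtain ⟨a', b', ha', hb', hab', hz'⟩ := hz
    have e0 : V i 0 = (i : ℝ) * (a * P1 0 + b * P2 0) := by
      rw [← hyeq, ← hy']; simp; ring
    have e1 : V i 1 = (i : ℝ) * (a * P1 1 + b * P2 1) := by
      rw [← hyeq, ← hy']; simp; ring
    have f0 : V i 0 = ((i : ℝ) + 1) * (a' * Pn 0 + b' * P1 0) := by
      rw [← hzeq, ← hz']; simp; ring
    have f1 : V i 1 = ((i : ℝ) + 1) * (a' * Pn 1 + b' * P1 1) := by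
      rw [← hzeq, ← hz']; simp; ring
    refine ⟨(i : ℝ) * b, ((i : ℝ) + 1) * a', ?_, ?_, ?_⟩
    · rw [e0, e1, hC2def]; linear_combination ((i:ℝ) * P1 1 * P1 0 - (i:ℝ) * P1 0 * P1 1) * hab
    · rw [f0, f1, hCndef]; linear_combination (0:ℝ) * hab'
    · have g0 : (i : ℝ) * (a * P1 0 + b * P2 0) = ((i : ℝ) + 1) * (a' * Pn 0 + b' * P1 0) := by
        rw [← e0, f0]
      have g1 : (i : ℝ) * (a * P1 1 + b * P2 1) = ((i : ℝ) + 1) * (a' * Pn 1 + b' * P1 1) := by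
        rw [← e1, f1]
      rw [ha2def, handef, hAdef]
      linear_combination P1 0 * g0 + P1 1 * g1 - (i : ℝ) * (P1 0 ^ 2 + P1 1 ^ 2) * hab +
        ((i : ℝ) + 1) * (P1 0 ^ 2 + P1 1 ^ 2) * hab'
  intro i hi j hj
  rw [infDist_line P1 h1, infDist_line P1 h1]
  obtain ⟨u, v, h1i, h2i, h3i⟩ := key i hi
  obtain ⟨u', v', h1j, h2j, h3j⟩ := key j hj
  have habs : |V i 0 * P1 1 - V i 1 * P1 0| = |V j 0 * P1 1 - V j 1 * P1 0| := by
    by_cases hc2 : C2 = 0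
    · rw [h1i, h1j, hc2, mul_zero, mul_zero]
    by_cases hcn : Cn = 0
    · rw [h2i, h2j, hcn, mul_zero, mul_zero]
    have Ki : (Cn * (a2 - A) - C2 * (an - A)) * (V i 0 * P1 1 - V i 1 * P1 0) = A * C2 * Cn := by
      linear_combination Cn * (a2 - A) * h1i - C2 * (an - A) * h2i + C2 * Cn * h3i
    have Kj : (Cn * (a2 - A) - C2 * (an - A)) * (V j 0 * P1 1 - V j 1 * P1 0) = A * C2 * Cn := by
      linear_combination Cn * (a2 - A) * h1j - C2 * (an - A) * h2j + C2 * Cn * h3j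
    have hK : (Cn * (a2 - A) - C2 * (an - A)) ≠ 0 := by
      intro h
      rw [h, zero_mul] at Ki
      exact (mul_ne_zero (mul_ne_zero hA.ne' hc2) hcn) Ki.symm
    have := mul_left_cancel₀ hK (Ki.trans Kj.symm)
    rw [this]
  rw [habs]
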